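/- arXiv:2404.00982 — 2 statements merged into one kernel-verified Lean document; each statement's English description precedes it below -/
import Mathlib

section
/- Let Q ∈ ℂ^{N×N} be an arbitrary complex matrix, and suppose the symmetric part (Q + Qᵀ)/2 admits a Takagi-type factorization (Q + Qᵀ)/2 = S Σ Sᵀ, where S ∈ ℂ^{N×N} is unitary and Σ ∈ ℂ^{N×N} is diagonal with nonnegative real diagonal entries. Then the matrix Ψ* = S Sᵀ is symmetric and unitary, and for every symmetric unitary matrix Ψ ∈ ℂ^{N×N} (i.e., Ψᵀ = Ψ and Ψ Ψᴴ = I) it holds that ‖Ψ − Q‖_F ≥ ‖S Sᵀ − Q‖_F; that is, S Sᵀ minimizes the Frobenius-norm distance to Q over all symmetric unitary matrices. -/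
open scoped Matrix

/-- Frobenius norm of a complex matrix. -/
noncomputable def frob {N : ℕ} (A : Matrix (Fin N) (Fin N) ℂ) : ℝ :=
  Real.sqrt (∑ i, ∑ j, ‖A i j‖ ^ 2)

lemma myCT_transpose {N : ℕ} (A : Matrix (Fin N) (Fin N) ℂ) : (Aᵀ)ᴴ = (Aᴴ)ᵀ := by
  ext i j
  simp [Matrix.conjTranspose_apply]

/-- **Theorem 1**: if `(Q + Qᵀ)/2 = S * Σ * Sᵀ` with `S` unitary and `Σ` diagonal with
nonnegative real entries, then `S * Sᵀ` is the symmetric unitary matrix closest to `Q`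
in Frobenius norm. -/
theorem nearest_symmetric_unitary {N : ℕ} (Q S Sig : Matrix (Fin N) (Fin N) ℂ)
    (hS : S * Sᴴ = 1)
    (hSigdiag : Sig.IsDiag)
    (hSigpos : ∀ i, ∃ r : ℝ, 0 ≤ r ∧ Sig i i = (r : ℂ))
    (hTakagi : (1 / 2 : ℂ) • (Q + Qᵀ) = S * Sig * Sᵀ) :
    (S * Sᵀ)ᵀ = S * Sᵀ ∧ (S * Sᵀ) * (S * Sᵀ)ᴴ = 1 ∧
      ∀ Ψ : Matrix (Fin N) (Fin N) ℂ, Ψᵀ = Ψ → Ψ * Ψᴴ = 1 →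
        frob (S * Sᵀ - Q) ≤ frob (Ψ - Q) := by
  have hS' : Sᴴ * S = 1 := mul_eq_one_comm.mp hS
  have hsymm : (S * Sᵀ)ᵀ = S * Sᵀ := by
    rw [Matrix.transpose_mul, Matrix.transpose_transpose]
  have hT1 : Sᵀ * Sᴴᵀ = 1 := by
    rw [← Matrix.transpose_mul, hS', Matrix.transpose_one]
  have hT2 : Sᴴᵀ * Sᵀ = 1 := by
    rw [← Matrix.transpose_mul, hS, Matrix.transpose_one]
  have hunit : (S * Sᵀ) * (S * Sᵀ)ᴴ = 1 := by
    rw [Matrix.conjTranspose_mul, myCT_transpose]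
    calc S * Sᵀ * (Sᴴᵀ * Sᴴ) = S * (Sᵀ * Sᴴᵀ) * Sᴴ := by
          simp only [Matrix.mul_assoc]
      _ = 1 := by rw [hT1, Matrix.mul_one, hS]
  refine ⟨hsymm, hunit, ?_⟩
  obtain ⟨σ, hσ⟩ : ∃ σ : Fin N → ℝ, ∀ i, 0 ≤ σ i ∧ Sig i i = (σ i : ℂ) :=
    ⟨fun i => (hSigpos i).choose, fun i => (hSigpos i).choose_spec⟩
  -- Sig is conj-transpose fixed
  have hSigH : Sigᴴ = Sig := by
    ext i j
    by_cases h : j = i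
    · subst h
      simp [Matrix.conjTranspose_apply, (hσ j).2]
    · rw [Matrix.conjTranspose_apply, hSigdiag h, hSigdiag (Ne.symm h), star_zero]
  -- row-normalization of a unitary
  have hrow : ∀ (M : Matrix (Fin N) (Fin N) ℂ), M * Mᴴ = 1 →
      ∀ i, ∑ j, Complex.normSq (M i j) = 1 := by
    intro M hM i
    have h0 := congrFun (congrFun hM i) i
    rw [Matrix.mul_apply] at h0
    have h1 : ∑ j, (Complex.normSq (M i j) : ℂ) = 1 := by
      simpa [Matrix.conjTranspose_apply, Complex.mul_conj, Matrix.one_apply] using h0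
    exact_mod_cast h1
  -- trace identity for symmetric Ψ
  have htrace : ∀ (Ψ : Matrix (Fin N) (Fin N) ℂ), Ψᵀ = Ψ →
      Matrix.trace (Ψ * Qᴴ) = Matrix.trace ((Sᴴ * Ψ * Sᴴᵀ) * Sig) := by
    intro Ψ hΨ
    have key : Matrix.trace (Ψ * ((1 / 2 : ℂ) • (Q + Qᵀ))ᴴ) = Matrix.trace (Ψ * Qᴴ) := by
      rw [Matrix.conjTranspose_smul, Matrix.conjTranspose_add,
        myCT_transpose, Matrix.mul_smul, Matrix.mul_add,
        Matrix.trace_smul, Matrix.trace_add]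
      have h2 : Matrix.trace (Ψ * Qᴴᵀ) = Matrix.trace (Ψ * Qᴴ) := by
        rw [← Matrix.trace_transpose (Ψ * Qᴴᵀ), Matrix.transpose_mul,
          Matrix.transpose_transpose, hΨ, Matrix.trace_mul_comm]
      rw [h2]
      have : (star (1 / 2 : ℂ)) = (1 / 2 : ℂ) := by
        simp [Complex.star_def, Complex.ext_iff]
      rw [this, smul_eq_mul]
      ring
    have hH : (S * Sig * Sᵀ)ᴴ = Sᴴᵀ * Sig * Sᴴ := by
      rw [Matrix.conjTranspose_mul, Matrix.conjTranspose_mul, myCT_transpose, hSigH,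
        ← Matrix.mul_assoc]
    rw [← key, hTakagi, hH, ← Matrix.mul_assoc, ← Matrix.mul_assoc,
      Matrix.trace_mul_comm, ← Matrix.mul_assoc, ← Matrix.mul_assoc]
  -- trace bound for any unitary M
  have hbound : ∀ (M : Matrix (Fin N) (Fin N) ℂ), M * Mᴴ = 1 →
      (Matrix.trace (M * Sig)).re ≤ ∑ i, σ i := by
    intro M hM
    have htr : Matrix.trace (M * Sig) = ∑ i, M i i * Sig i i := by
      rw [Matrix.trace]
      refine Finset.sum_congr rfl fun i _ => ?_
      rw [Matrix.diag_apply, Matrix.mul_apply]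
      refine Finset.sum_eq_single i (fun j _ hj => ?_) (by simp)
      rw [hSigdiag hj, mul_zero]
    rw [htr, Complex.re_sum]
    refine Finset.sum_le_sum fun i _ => ?_
    have hre : (M i i * Sig i i).re = σ i * (M i i).re := by
      rw [(hσ i).2]
      simp [Complex.mul_re]
      ring
    rw [hre]
    have hns : Complex.normSq (M i i) ≤ 1 := by
      have := hrow M hM i
      calc Complex.normSq (M i i) ≤ ∑ j, Complex.normSq (M i j) :=
            Finset.single_le_sum (fun j _ => Complex.normSq_nonneg _) (Finset.mem_univ i)
        _ = 1 := this
    have hre1 : (M i i).re ≤ 1 := by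
      have h2 := Complex.normSq_apply (M i i)
      nlinarith [sq_nonneg ((M i i).re - 1), sq_nonneg (M i i).im]
    calc σ i * (M i i).re ≤ σ i * 1 := mul_le_mul_of_nonneg_left hre1 (hσ i).1
      _ = σ i := mul_one _
  -- unitarity of Sᴴ * Ψ * Sᴴᵀ
  have hMunit : ∀ (Ψ : Matrix (Fin N) (Fin N) ℂ), Ψ * Ψᴴ = 1 →
      (Sᴴ * Ψ * Sᴴᵀ) * (Sᴴ * Ψ * Sᴴᵀ)ᴴ = 1 := by
    intro Ψ hΨ
    have hcc : (Sᴴᵀ)ᴴ = Sᵀ := by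
      rw [← myCT_transpose, Matrix.conjTranspose_conjTranspose]
    rw [Matrix.conjTranspose_mul, Matrix.conjTranspose_mul, hcc,
      Matrix.conjTranspose_conjTranspose]
    calc Sᴴ * Ψ * Sᴴᵀ * (Sᵀ * (Ψᴴ * S))
        = Sᴴ * (Ψ * ((Sᴴᵀ * Sᵀ) * (Ψᴴ * S))) := by simp only [Matrix.mul_assoc]
      _ = Sᴴ * (Ψ * (Ψᴴ * S)) := by rw [hT2, Matrix.one_mul]
      _ = (Sᴴ * ((Ψ * Ψᴴ) * S)) := by simp only [Matrix.mul_assoc]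
      _ = 1 := by rw [hΨ, Matrix.one_mul, hS']
  -- equality for S * Sᵀ
  have hM0 : Sᴴ * (S * Sᵀ) * Sᴴᵀ = 1 := by
    calc Sᴴ * (S * Sᵀ) * Sᴴᵀ = (Sᴴ * S) * (Sᵀ * Sᴴᵀ) := by simp only [Matrix.mul_assoc]
      _ = 1 := by rw [hS', hT1, Matrix.one_mul]
  have htrSig : (Matrix.trace Sig).re = ∑ i, σ i := by
    rw [Matrix.trace, Complex.re_sum]
    refine Finset.sum_congr rfl fun i _ => ?_
    rw [Matrix.diag_apply, (hσ i).2, Complex.ofReal_re]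
  have heq0 : (Matrix.trace ((S * Sᵀ) * Qᴴ)).re = ∑ i, σ i := by
    rw [htrace (S * Sᵀ) hsymm, hM0, Matrix.one_mul, htrSig]
  -- Frobenius expansion
  set C : ℝ := ∑ i, ∑ j, Complex.normSq (Q i j) with hC
  have hfro : ∀ (Ψ : Matrix (Fin N) (Fin N) ℂ), Ψ * Ψᴴ = 1 →
      (∑ i, ∑ j, ‖(Ψ - Q) i j‖ ^ 2)
        = N + C - 2 * (Matrix.trace (Ψ * Qᴴ)).re := by
    intro Ψ hΨ
    have htr : (Matrix.trace (Ψ * Qᴴ)).re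
        = ∑ i, ∑ j, (Ψ i j * (starRingEnd ℂ) (Q i j)).re := by
      rw [Matrix.trace, Complex.re_sum]
      refine Finset.sum_congr rfl fun i _ => ?_
      rw [Matrix.diag_apply, Matrix.mul_apply, Complex.re_sum]
      refine Finset.sum_congr rfl fun j _ => ?_
      rw [Matrix.conjTranspose_apply]
      rfl
    have hentry : ∀ i j, ‖(Ψ - Q) i j‖ ^ 2
        = Complex.normSq (Ψ i j) + Complex.normSq (Q i j)
          - 2 * (Ψ i j * (starRingEnd ℂ) (Q i j)).re := by
      intro i j
      rw [Matrix.sub_apply, Complex.sq_norm, Complex.normSq_sub]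
    rw [htr]
    calc (∑ i, ∑ j, ‖(Ψ - Q) i j‖ ^ 2)
        = ∑ i, ∑ j, (Complex.normSq (Ψ i j) + Complex.normSq (Q i j)
            - 2 * (Ψ i j * (starRingEnd ℂ) (Q i j)).re) := by
          refine Finset.sum_congr rfl fun i _ => Finset.sum_congr rfl fun j _ => hentry i j
      _ = (∑ i, ∑ j, Complex.normSq (Ψ i j)) + C
            - 2 * ∑ i, ∑ j, (Ψ i j * (starRingEnd ℂ) (Q i j)).re := by
          rw [hC]
          simp only [Finset.sum_sub_distrib, Finset.sum_add_distrib, Finset.mul_sum]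
      _ = N + C - 2 * ∑ i, ∑ j, (Ψ i j * (starRingEnd ℂ) (Q i j)).re := by
          congr 2
          have : ∀ i : Fin N, ∑ j, Complex.normSq (Ψ i j) = 1 := hrow Ψ hΨ
          simp [this]
  intro Ψ hΨsymm hΨunit
  have hle : (Matrix.trace (Ψ * Qᴴ)).re ≤ ∑ i, σ i := by
    rw [htrace Ψ hΨsymm]
    exact hbound _ (hMunit Ψ hΨunit)
  unfold frob
  apply Real.sqrt_le_sqrt
  rw [hfro (S * Sᵀ) hunit, hfro Ψ hΨunit, heq0]
  linarith
end

section
/- Let A ∈ ℂ^{M×M} be Hermitian with an orthonormal eigenbasis u_1, …, u_M and corresponding real eigenvalues λ_1, …, λ_M, let b ∈ ℂ^M, let N > 0, and suppose γ ∈ ℝ satisfies γ > max_d λ_d and Σ_{d=1}^{M} |u_dᴴ b|² / (γ − λ_d)² = N. Define ψ* = Σ_{d=1}^{M} (u_dᴴ b / (γ − λ_d)) u_d. Then ‖ψ*‖² = N, and for every ψ ∈ ℂ^M with ‖ψ‖² = N, ψᴴ A ψ + 2 Re(ψᴴ b) ≤ ψ*ᴴ A ψ* + 2 Re(ψ*ᴴ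 b); that is, ψ* maximizes ψᴴ A ψ + 2Re(ψᴴ b) over the sphere ‖ψ‖² = N. -/
open scoped Matrix

private lemma qsm_key (r : ℝ) (hr : 0 < r) (v β : ℂ) :
    r * ‖v‖^2 - 2 * ((starRingEnd ℂ) v * β).re
      = r * ‖v - β / (r:ℂ)‖^2 - ‖β‖^2 / r := by
  have hr' : r ≠ 0 := ne_of_gt hr
  simp only [← Complex.normSq_eq_norm_sq]
  simp only [Complex.normSq_apply, Complex.sub_re, Complex.sub_im, Complex.div_re,
    Complex.div_im, Complex.mul_re, Complex.mul_im, Complex.ofReal_re, Complex.ofReal_im,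
    Complex.normSq_apply, RingHom.coe_coe, Complex.conj_re, Complex.conj_im]
  field_simp
  ring

private lemma qsm_norm2 (z : ℂ) : (starRingEnd ℂ) z * z = ((‖z‖^2 : ℝ) : ℂ) := by
  rw [mul_comm, Complex.mul_conj]
  norm_cast
  rw [Complex.normSq_eq_norm_sq]

private lemma qsm_complete {M : ℕ} (u : Fin M → Fin M → ℂ)
    (horth : ∀ d e, ∑ m, (starRingEnd ℂ) (u d m) * u e m = if d = e then 1 else 0)
    (ψ : Fin M → ℂ) (m : Fin M) :
    ∑ d, (∑ k, (starRingEnd ℂ) (u d k) * ψ k) * u d m = ψ m := by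
  classical
  have h1 : (Matrix.of u) * (Matrix.of u)ᴴ = 1 := by
    ext d e
    simp [Matrix.mul_apply, Matrix.conjTranspose_apply, Matrix.one_apply]
    rw [show (∑ x, u d x * (starRingEnd ℂ) (u e x))
        = ∑ x, (starRingEnd ℂ) ((starRingEnd ℂ) (u d x) * u e x) by simp [mul_comm],
      ← map_sum, horth d e]
    split <;> simp
  have h2 : (Matrix.of u)ᴴ * (Matrix.of u) = 1 := mul_eq_one_comm.mp h1
  have h3 : ∀ k, ∑ d, (starRingEnd ℂ) (u d k) * u d m = if k = m then 1 else 0 := by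
    intro k
    have := congrFun (congrFun h2 k) m
    simpa [Matrix.mul_apply, Matrix.conjTranspose_apply, Matrix.one_apply] using this
  calc ∑ d, (∑ k, (starRingEnd ℂ) (u d k) * ψ k) * u d m
      = ∑ k, (∑ d, (starRingEnd ℂ) (u d k) * u d m) * ψ k := by
        simp only [Finset.sum_mul]
        rw [Finset.sum_comm]
        exact Finset.sum_congr rfl fun k _ => Finset.sum_congr rfl fun d _ => by ring
    _ = ψ m := by
        simp only [h3]
        simp

private lemma qsm_bilin {M : ℕ} (u : Fin M → Fin M → ℂ)
    (horth : ∀ d e, ∑ m, (starRingEnd ℂ) (u d m) * u e m = if d = e then 1 else 0)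
    (v w : Fin M → ℂ) :
    ∑ m, (starRingEnd ℂ) (∑ d, v d * u d m) * (∑ e, w e * u e m)
      = ∑ d, (starRingEnd ℂ) (v d) * w d := by
  classical
  calc ∑ m, (starRingEnd ℂ) (∑ d, v d * u d m) * (∑ e, w e * u e m)
      = ∑ d, ∑ e, ((starRingEnd ℂ) (v e) * w d) * ∑ m, (starRingEnd ℂ) (u e m) * u d m := by
        simp only [map_sum, map_mul, Finset.sum_mul, Finset.mul_sum]
        rw [Finset.sum_comm]
        refine Finset.sum_congr rfl fun d _ => ?_
        rw [Finset.sum_comm]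
        exact Finset.sum_congr rfl fun e _ => Finset.sum_congr rfl fun m _ => by ring
    _ = ∑ d, (starRingEnd ℂ) (v d) * w d := by
        simp [horth, Finset.sum_ite_eq, mul_ite]

private lemma qsm_lin {M : ℕ} (u : Fin M → Fin M → ℂ) (b : Fin M → ℂ) (v : Fin M → ℂ) :
    ∑ m, (starRingEnd ℂ) (∑ d, v d * u d m) * b m
      = ∑ d, (starRingEnd ℂ) (v d) * ∑ m, (starRingEnd ℂ) (u d m) * b m := by
  simp only [map_sum, map_mul, Finset.sum_mul, Finset.mul_sum]
  rw [Finset.sum_comm]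
  exact Finset.sum_congr rfl fun d _ => Finset.sum_congr rfl fun m _ => by ring

private lemma qsm_quad {M : ℕ} (A : Matrix (Fin M) (Fin M) ℂ) (u : Fin M → Fin M → ℂ)
    (lam : Fin M → ℝ)
    (horth : ∀ d e, ∑ m, (starRingEnd ℂ) (u d m) * u e m = if d = e then 1 else 0)
    (heig : ∀ d, A.mulVec (u d) = (lam d : ℂ) • u d) (v : Fin M → ℂ) :
    ∑ i, ∑ j, (starRingEnd ℂ) (∑ d, v d * u d i) * A i j * (∑ d, v d * u d j)
      = ∑ d, (starRingEnd ℂ) (v d) * (((lam d : ℂ)) * v d) := by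
  classical
  have hmv : ∀ i, ∑ j, A i j * (∑ d, v d * u d j) = ∑ d, ((lam d : ℂ) * v d) * u d i := by
    intro i
    calc ∑ j, A i j * (∑ d, v d * u d j)
        = ∑ d, v d * ∑ j, A i j * u d j := by
          simp only [Finset.mul_sum]
          rw [Finset.sum_comm]
          exact Finset.sum_congr rfl fun d _ => Finset.sum_congr rfl fun j _ => by ring
      _ = ∑ d, ((lam d : ℂ) * v d) * u d i := by
          refine Finset.sum_congr rfl fun d _ => ?_
          have := congrFun (heig d) i
          simp only [Matrix.mulVec, dotProduct, Pi.smul_apply, smul_eq_mul] at this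
          rw [this]; ring
  calc ∑ i, ∑ j, (starRingEnd ℂ) (∑ d, v d * u d i) * A i j * (∑ d, v d * u d j)
      = ∑ i, (starRingEnd ℂ) (∑ d, v d * u d i) * ∑ j, A i j * (∑ d, v d * u d j) := by
        refine Finset.sum_congr rfl fun i _ => ?_
        rw [Finset.mul_sum]
        exact Finset.sum_congr rfl fun j _ => by ring
    _ = ∑ i, (starRingEnd ℂ) (∑ d, v d * u d i) * ∑ d, ((lam d : ℂ) * v d) * u d i := by
        exact Finset.sum_congr rfl fun i _ => by rw [hmv i]
    _ = ∑ d, (starRingEnd ℂ) (v d) * (((lam d : ℂ)) * v d) :=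
        qsm_bilin u horth v (fun d => (lam d : ℂ) * v d)

/-- Closed-form solution of the norm-constrained quadratic maximization problem (29):
with `A` Hermitian having orthonormal eigenbasis `u_d` and eigenvalues `λ_d`, and
`γ > max_d λ_d` solving `∑_d |u_dᴴ b|²/(γ − λ_d)² = N`, the vector
`ψ* = ∑_d (u_dᴴ b/(γ − λ_d)) u_d` lies on the sphere `‖ψ‖² = N` and maximizes
`ψᴴ A ψ + 2 Re(ψᴴ b)` over it. -/
theorem quadratic_sphere_max_closed_form {M : ℕ} (A : Matrix (Fin M) (Fin M) ℂ)
    (hA : Aᴴ = A) (u : Fin M → Fin M → ℂ) (lam : Fin M → ℝ)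
    (horth : ∀ d e, ∑ m, (starRingEnd ℂ) (u d m) * u e m = if d = e then 1 else 0)
    (heig : ∀ d, A.mulVec (u d) = (lam d : ℂ) • u d)
    (b : Fin M → ℂ) (N : ℝ) (hN : 0 < N)
    (γ : ℝ) (hγ : ∀ d, lam d < γ)
    (hroot : ∑ d, ‖∑ m, (starRingEnd ℂ) (u d m) * b m‖ ^ 2 / (γ - lam d) ^ 2 = N) :
    let ψstar : Fin M → ℂ :=
      fun m => ∑ d, ((∑ k, (starRingEnd ℂ) (u d k) * b k) / ((γ : ℂ) - (lam d : ℂ))) * u d m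
    (∑ m, ‖ψstar m‖ ^ 2 = N) ∧
    ∀ ψ : Fin M → ℂ, ∑ m, ‖ψ m‖ ^ 2 = N →
      (∑ i, ∑ j, (starRingEnd ℂ) (ψ i) * A i j * ψ j).re
          + 2 * (∑ m, (starRingEnd ℂ) (ψ m) * b m).re
        ≤ (∑ i, ∑ j, (starRingEnd ℂ) (ψstar i) * A i j * ψstar j).re
          + 2 * (∑ m, (starRingEnd ℂ) (ψstar m) * b m).re := by
  classical
  intro ψstar
  set β : Fin M → ℂ := fun d => ∑ k, (starRingEnd ℂ) (u d k) * b k with hβdef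
  set c : Fin M → ℂ := fun d => β d / ((γ : ℂ) - (lam d : ℂ)) with hcdef
  have hψstar : ψstar = fun m => ∑ d, c d * u d m := rfl
  have hrpos : ∀ d, 0 < γ - lam d := fun d => sub_pos.mpr (hγ d)
  have hrne : ∀ d, (γ - lam d) ≠ 0 := fun d => ne_of_gt (hrpos d)
  have hcast : ∀ d, ((γ : ℂ) - (lam d : ℂ)) = ((γ - lam d : ℝ) : ℂ) := by
    intro d; push_cast; ring
  -- norms of expansions
  have hsum2cast : ∀ f : Fin M → ℂ,
      (∑ m, (starRingEnd ℂ) (f m) * f m) = ((∑ m, ‖f m‖^2 : ℝ) : ℂ) := by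
    intro f
    push_cast
    exact Finset.sum_congr rfl fun m _ => by rw [qsm_norm2]; push_cast; ring
  have hnormsum : ∀ v : Fin M → ℂ,
      ∑ m, ‖∑ d, v d * u d m‖^2 = ∑ d, ‖v d‖^2 := by
    intro v
    have h := qsm_bilin u horth v v
    rw [hsum2cast, hsum2cast v] at h
    exact_mod_cast h
  have hcnorm : ∀ d, ‖c d‖^2 = ‖β d‖^2 / (γ - lam d)^2 := by
    intro d
    rw [show c d = β d / ((γ - lam d : ℝ) : ℂ) by rw [hcdef]; simp only []; rw [hcast d]]
    rw [norm_div, Complex.norm_real, Real.norm_eq_abs, abs_of_pos (hrpos d), div_pow]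
  have hpart1 : ∑ m, ‖ψstar m‖^2 = N := by
    simp only [hψstar]
    rw [hnormsum c]
    rw [Finset.sum_congr rfl fun d _ => hcnorm d]
    exact hroot
  refine ⟨hpart1, ?_⟩
  intro ψ hψ
  set v : Fin M → ℂ := fun d => ∑ k, (starRingEnd ℂ) (u d k) * ψ k with hvdef
  have hψeq : ∀ m, ψ m = ∑ d, v d * u d m := fun m => (qsm_complete u horth ψ m).symm
  -- constraint in coefficients
  have hv2 : ∑ d, ‖v d‖^2 = N := by
    rw [← hnormsum v, ← Finset.sum_congr rfl fun m (_ : m ∈ Finset.univ) =>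
      congrArg (fun z : ℂ => ‖z‖^2) (hψeq m)]
    exact hψ
  -- rewrite the four quantities
  have hq : (∑ i, ∑ j, (starRingEnd ℂ) (ψ i) * A i j * ψ j)
      = ∑ d, (starRingEnd ℂ) (v d) * ((lam d : ℂ) * v d) := by
    rw [show (∑ i, ∑ j, (starRingEnd ℂ) (ψ i) * A i j * ψ j)
        = ∑ i, ∑ j, (starRingEnd ℂ) (∑ d, v d * u d i) * A i j * (∑ d, v d * u d j) from
      Finset.sum_congr rfl fun i _ => Finset.sum_congr rfl fun j _ => by
        rw [← hψeq i, ← hψeq j]]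
    exact qsm_quad A u lam horth heig v
  have hl : (∑ m, (starRingEnd ℂ) (ψ m) * b m) = ∑ d, (starRingEnd ℂ) (v d) * β d := by
    rw [show (∑ m, (starRingEnd ℂ) (ψ m) * b m)
        = ∑ m, (starRingEnd ℂ) (∑ d, v d * u d m) * b m from
      Finset.sum_congr rfl fun m _ => by rw [← hψeq m]]
    exact qsm_lin u b v
  have hqstar : (∑ i, ∑ j, (starRingEnd ℂ) (ψstar i) * A i j * ψstar j)
      = ∑ d, (starRingEnd ℂ) (c d) * ((lam d : ℂ) * c d) := by
    simp only [hψstar]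
    exact qsm_quad A u lam horth heig c
  have hlstar : (∑ m, (starRingEnd ℂ) (ψstar m) * b m) = ∑ d, (starRingEnd ℂ) (c d) * β d := by
    simp only [hψstar]
    exact qsm_lin u b c
  -- real parts of the diagonal quadratic forms
  have hre : ∀ w : Fin M → ℂ,
      (∑ d, (starRingEnd ℂ) (w d) * ((lam d : ℂ) * w d)).re = ∑ d, lam d * ‖w d‖^2 := by
    intro w
    rw [Complex.re_sum]
    refine Finset.sum_congr rfl fun d _ => ?_
    rw [show (starRingEnd ℂ) (w d) * ((lam d : ℂ) * w d)
        = (lam d : ℂ) * ((starRingEnd ℂ) (w d) * w d) by ring, qsm_norm2,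
      ← Complex.ofReal_mul, Complex.ofReal_re]
  have hcβ : ∀ d, ((starRingEnd ℂ) (c d) * β d).re = ‖β d‖^2 / (γ - lam d) := by
    intro d
    have : (starRingEnd ℂ) (c d) * β d = ((‖β d‖^2 / (γ - lam d) : ℝ) : ℂ) := by
      rw [show c d = β d / ((γ - lam d : ℝ) : ℂ) by rw [hcdef]; simp only []; rw [hcast d]]
      rw [map_div₀, Complex.conj_ofReal, div_mul_eq_mul_div, qsm_norm2]
      push_cast
      ring
    rw [this, Complex.ofReal_re]
  -- assemble
  rw [hq, hl, hqstar, hlstar, hre v, hre c, Complex.re_sum, Complex.re_sum,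
    Finset.sum_congr rfl fun d _ => hcβ d,
    show (∑ d, lam d * ‖c d‖^2) = ∑ d, lam d * (‖β d‖^2 / (γ - lam d)^2) from
      Finset.sum_congr rfl fun d _ => by rw [hcnorm d]]
  -- now a purely real inequality
  have e1 : ∀ d, lam d * ‖v d‖^2 + 2 * ((starRingEnd ℂ) (v d) * β d).re
      = γ * ‖v d‖^2 - (γ - lam d) * ‖v d - β d / ((γ - lam d : ℝ) : ℂ)‖^2
        + ‖β d‖^2 / (γ - lam d) := by
    intro d
    have hk := qsm_key (γ - lam d) (hrpos d) (v d) (β d)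
    linear_combination -hk
  have h1 : ∑ d, lam d * ‖v d‖^2 + 2 * ∑ d, ((starRingEnd ℂ) (v d) * β d).re
      = γ * N - (∑ d, (γ - lam d) * ‖v d - β d / ((γ - lam d : ℝ) : ℂ)‖^2)
        + ∑ d, ‖β d‖^2 / (γ - lam d) := by
    rw [Finset.mul_sum, ← Finset.sum_add_distrib,
      Finset.sum_congr rfl fun d _ => e1 d, Finset.sum_add_distrib,
      Finset.sum_sub_distrib, ← Finset.mul_sum, hv2]
  have e2 : ∀ d, lam d * (‖β d‖^2 / (γ - lam d)^2) + 2 * (‖β d‖^2 / (γ - lam d))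
      = γ * (‖β d‖^2 / (γ - lam d)^2) + ‖β d‖^2 / (γ - lam d) := by
    intro d
    have h := hrne d
    field_simp
    ring
  have h2 : ∑ d, lam d * (‖β d‖^2 / (γ - lam d)^2) + 2 * ∑ d, ‖β d‖^2 / (γ - lam d)
      = γ * N + ∑ d, ‖β d‖^2 / (γ - lam d) := by
    rw [Finset.mul_sum, ← Finset.sum_add_distrib,
      Finset.sum_congr rfl fun d _ => e2 d, Finset.sum_add_distrib,
      ← Finset.mul_sum, hroot]
  have h3 : 0 ≤ ∑ d, (γ - lam d) * ‖v d - β d / ((γ - lam d : ℝ) : ℂ)‖^2 :=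
    Finset.sum_nonneg fun d _ => mul_nonneg (le_of_lt (hrpos d)) (sq_nonneg _)
  linarith
end
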